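/- Polar decomposition: let M be a von Neumann algebra on a complex Hilbert space H and let a ∈ M. Then there exists u ∈ M such that u is a partial isometry (u u* u = u), a = u · √(a* a), and u* · a = √(a* a). -/

import Mathlib

set_option synthInstance.maxHeartbeats 1000000
set_option maxHeartbeats 4000000

open scoped InnerProductSpace


section elemental
variable {A : Type*} [CStarAlgebra A]

lemma my_cfc_mem_elemental (q : A) (g : ℂ → ℂ) (hg : Continuous g) (hq : IsStarNormal q) :
    cfc g q ∈ StarAlgebra.elemental ℂ q := by
  rw [cfc_apply g q hq (hg.continuousOn), cfcHom_eq_of_isStarNormal]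
  exact SetLike.coe_mem _

lemma my_commute_of_mem_elemental {q b v : A}
    (h1 : q * b = b * q) (h2 : star q * b = b * star q)
    (hv : v ∈ StarAlgebra.elemental ℂ q) : v * b = b * v := by
  induction hv using StarAlgebra.elemental.induction_on with
  | self => exact h1
  | star_self => exact h2
  | algebraMap r => exact Algebra.commutes r b
  | add u hu v hv Hu Hv => rw [add_mul, mul_add, Hu, Hv]
  | mul u hu v hv Hu Hv => rw [mul_assoc, Hv, ← mul_assoc, Hu, mul_assoc]
  | closure s hs Hs v hv =>
      have hcl : IsClosed {x : A | x * b = b * x} :=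
        isClosed_eq (continuous_id.mul continuous_const) (continuous_const.mul continuous_id)
      exact hcl.closure_subset_iff.mpr (fun u hu => Hs u hu) hv
end elemental

lemma my_sqrt_mem_elemental {H : Type*} [NormedAddCommGroup H] [InnerProductSpace ℂ H]
    [CompleteSpace H] (q : H →L[ℂ] H) (hq : 0 ≤ q) :
    CFC.sqrt q ∈ StarAlgebra.elemental ℂ q := by
  have hsa : IsSelfAdjoint q := .of_nonneg hq
  have h1 : CFC.sqrt q = cfcₙ NNReal.sqrt q := rfl
  rw [h1, cfcₙ_eq_cfc, cfc_nnreal_eq_real _ _ hq, cfc_real_eq_complex _ hsa]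
  exact my_cfc_mem_elemental _ _ (by continuity) hsa.isStarNormal

/-- **Polar decomposition** in a von Neumann algebra: for every `a` in a von Neumann algebra `M`
on a complex Hilbert space `H` there is a partial isometry `u ∈ M` with
`a = u * √(a* a)` and `u* * a = √(a* a)`. -/
theorem vonNeumannAlgebra_polar_decomposition
    {H : Type*} [NormedAddCommGroup H] [InnerProductSpace ℂ H] [CompleteSpace H]
    (M : VonNeumannAlgebra H) (a : H →L[ℂ] H) (ha : a ∈ M) :
    ∃ u : H →L[ℂ] H, u ∈ M ∧ u * star u * u = u ∧
      a = u * CFC.sqrt (star a * a) ∧ star u * a = CFC.sqrt (star a * a) := by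
  set p := CFC.sqrt (star a * a) with hp
  have hq : (0 : H →L[ℂ] H) ≤ star a * a := star_mul_self_nonneg a
  have hpsa : IsSelfAdjoint p := .of_nonneg (CFC.sqrt_nonneg _)
  have hpp : p * p = star a * a := CFC.sqrt_mul_sqrt_self _ hq
  have hpadj : ∀ x y : H, ⟪p x, y⟫_ℂ = ⟪x, p y⟫_ℂ := by
    intro x y
    conv_rhs => rw [← hpsa.adjoint_eq]
    rw [ContinuousLinearMap.adjoint_inner_right]
  have hinner : ∀ x : H, ⟪p x, p x⟫_ℂ = ⟪a x, a x⟫_ℂ := by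
    intro x
    rw [hpadj, ← ContinuousLinearMap.mul_apply, hpp, ContinuousLinearMap.mul_apply,
      ContinuousLinearMap.star_eq_adjoint, ContinuousLinearMap.adjoint_inner_right]
  have hnorm : ∀ x : H, ‖a x‖ = ‖p x‖ := by
    intro x
    have h2 : ‖p x‖ ^ 2 = ‖a x‖ ^ 2 := by
      rw [← @inner_self_eq_norm_sq ℂ _ _ _ _ (p x), ← @inner_self_eq_norm_sq ℂ _ _ _ _ (a x),
        hinner]
    have := congrArg Real.sqrt h2
    simpa [Real.sqrt_sq (norm_nonneg _)] using this.symm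
  have key2 : ∀ x y : H, p x = p y → a x = a y := by
    intro x y hxy
    have h3 : ‖a x - a y‖ = ‖p x - p y‖ := by
      simpa [map_sub] using hnorm (x - y)
    rw [hxy, sub_self, norm_zero] at h3
    exact sub_eq_zero.mp (norm_eq_zero.mp h3)
  -- the submodule `s = range p` and its closure `K`
  set s : Submodule ℂ H := LinearMap.range (p : H →ₗ[ℂ] H) with hs
  set K : Submodule ℂ H := s.topologicalClosure with hK
  haveI : CompleteSpace K := s.isClosed_topologicalClosure.completeSpace_coe
  have hsK : ∀ {z : H}, z ∈ s → z ∈ K := fun hz => s.le_topologicalClosure hz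
  have hpxs : ∀ x : H, p x ∈ s := fun x => LinearMap.mem_range.mpr ⟨x, rfl⟩
  -- the inclusion of `s` into `K`
  let e : s →L[ℂ] K :=
    { toLinearMap := Submodule.inclusion s.le_topologicalClosure,
      cont := Continuous.subtype_mk continuous_subtype_val _ }
  have he : Isometry e := fun x y => rfl
  have h_dense : DenseRange e := by
    intro y
    rw [closure_subtype]
    have himg : (Subtype.val '' Set.range e) = (s : Set H) := by
      ext z
      constructor
      · rintro ⟨w, ⟨v, rfl⟩, rfl⟩
        exact v.2
      · intro hz
        exact ⟨e ⟨z, hz⟩, ⟨⟨z, hz⟩, rfl⟩, rfl⟩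
    rw [himg, ← Submodule.topologicalClosure_coe]
    exact y.2
  -- the isometry `w` on `s` determined by `w (p x) = a x`
  have hex : ∀ y : s, ∃ x : H, p x = (y : H) := fun y => LinearMap.mem_range.mp y.2
  have hw0 : ∀ (y : s) (x : H), p x = (y : H) → a (hex y).choose = a x := fun y x hx =>
    key2 _ _ ((hex y).choose_spec.trans hx.symm)
  let w : s →ₗ[ℂ] H :=
    { toFun := fun y => a (hex y).choose
      map_add' := by
        intro y z
        show a (hex (y + z)).choose = a (hex y).choose + a (hex z).choose
        rw [hw0 (y + z) ((hex y).choose + (hex z).choose)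
          (by rw [map_add, (hex y).choose_spec, (hex z).choose_spec]; rfl), map_add]
      map_smul' := by
        intro c y
        show a (hex (c • y)).choose = c • a (hex y).choose
        rw [hw0 (c • y) (c • (hex y).choose)
          (by rw [map_smul, (hex y).choose_spec]; rfl), map_smul]
        }
  have hwnorm : ∀ y : s, ‖w y‖ = ‖y‖ := by
    intro y
    show ‖a (hex y).choose‖ = ‖y‖
    rw [hnorm, (hex y).choose_spec]
    rfl
  let f : s →L[ℂ] H := w.mkContinuous 1 (fun y => by rw [hwnorm, one_mul])
  have hf : ∀ y : s, f y = w y := fun y => rfl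
  let ubar : K →L[ℂ] H := f.extend e
  have hue : ∀ y : s, ubar (e y) = f y := fun y =>
    ContinuousLinearMap.extend_eq (f := f) (e := e) h_dense he.isUniformInducing y
  let u : H →L[ℂ] H := ubar.comp (Submodule.orthogonalProjectionOnto K)
  have hPK : ∀ (z : H) (hz : z ∈ K), Submodule.orthogonalProjectionOnto K z = ⟨z, hz⟩ := fun z hz =>
    Submodule.orthogonalProjectionOnto_mem_subspace_eq_self (⟨z, hz⟩ : K)
  have hupx : ∀ x : H, u (p x) = a x := by
    intro x
    show ubar (Submodule.orthogonalProjectionOnto K (p x)) = a x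
    rw [hPK (p x) (hsK (hpxs x))]
    have h5 : (⟨p x, hsK (hpxs x)⟩ : K) = e ⟨p x, hpxs x⟩ := rfl
    rw [h5, hue, hf]
    exact hw0 ⟨p x, hpxs x⟩ x rfl
  have hiso : ∀ v : K, ‖ubar v‖ = ‖v‖ := by
    have hcl : IsClosed {v : K | ‖ubar v‖ = ‖v‖} :=
      isClosed_eq (continuous_norm.comp ubar.continuous) continuous_norm
    exact fun v => h_dense.induction_on v hcl (fun y => by rw [hue, hf, hwnorm]; rfl)
  let ulin : K →ₗᵢ[ℂ] H := ⟨ubar.toLinearMap, hiso⟩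
  have hinner2 : ∀ v t : K, ⟪ubar v, ubar t⟫_ℂ = ⟪(v : H), (t : H)⟫_ℂ := fun v t =>
    ulin.inner_map_map v t
  have hA : ∀ x y : H, ⟪u x, u y⟫_ℂ = ⟪((Submodule.orthogonalProjectionOnto K x : K) : H), y⟫_ℂ := by
    intro x y
    show ⟪ubar (Submodule.orthogonalProjectionOnto K x), ubar (Submodule.orthogonalProjectionOnto K y)⟫_ℂ = _
    rw [hinner2]
    have h1 : ⟪((Submodule.orthogonalProjectionOnto K x : K) : H), y⟫_ℂ -
        ⟪((Submodule.orthogonalProjectionOnto K x : K) : H), ((Submodule.orthogonalProjectionOnto K y : K) : H)⟫_ℂ = 0 := by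
      rw [← inner_sub_right]
      exact Submodule.inner_right_of_mem_orthogonal (SetLike.coe_mem _)
        (Submodule.sub_starProjection_mem_orthogonal y)
    exact (sub_eq_zero.mp h1).symm
  have hsua : star u * a = p := by
    ext x
    refine ext_inner_right ℂ (fun y => ?_)
    show ⟪(star u) (a x), y⟫_ℂ = ⟪p x, y⟫_ℂ
    rw [ContinuousLinearMap.star_eq_adjoint, ContinuousLinearMap.adjoint_inner_left, ← hupx x,
      hA (p x) y, hPK (p x) (hsK (hpxs x))]
  have huuu : u * star u * u = u := by
    ext x
    show u ((star u) (u x)) = u x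
    have hstar : (star u) (u x) = ((Submodule.orthogonalProjectionOnto K x : K) : H) := by
      refine ext_inner_right ℂ (fun y => ?_)
      rw [ContinuousLinearMap.star_eq_adjoint, ContinuousLinearMap.adjoint_inner_left]
      exact hA x y
    rw [hstar]
    show ubar (Submodule.orthogonalProjectionOnto K ((Submodule.orthogonalProjectionOnto K x : K) : H)) =
      ubar (Submodule.orthogonalProjectionOnto K x)
    rw [hPK _ (SetLike.coe_mem _)]
  have hau : a = u * p := by
    ext x
    exact (hupx x).symm
  -- membership in the von Neumann algebra
  have hu0 : ∀ y : H, y ∈ Kᗮ → u y = 0 := by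
    intro y hy
    show ubar (Submodule.orthogonalProjectionOnto K y) = 0
    rw [Submodule.orthogonalProjectionOnto_apply_of_mem_orthogonal hy, map_zero]
  have hker : ∀ y : H, p y = 0 → y ∈ Kᗮ := by
    intro y hy
    rw [Submodule.mem_orthogonal]
    intro v hv
    have hcl : IsClosed {v : H | ⟪v, y⟫_ℂ = 0} :=
      isClosed_eq (continuous_id.inner continuous_const) continuous_const
    have hsub : (s : Set H) ⊆ {v : H | ⟪v, y⟫_ℂ = 0} := by
      intro z hz
      obtain ⟨x, rfl⟩ := LinearMap.mem_range.mp hz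
      show ⟪p x, y⟫_ℂ = 0
      rw [hpadj, hy, inner_zero_right]
    have hvc : v ∈ closure (s : Set H) := by
      rw [← Submodule.topologicalClosure_coe]; exact hv
    exact hcl.closure_subset_iff.mpr hsub hvc
  have hKp : ∀ y : H, y ∈ Kᗮ → p y = 0 := by
    intro y hy
    have h1 : ⟪p y, p y⟫_ℂ = ⟪y, p (p y)⟫_ℂ := hpadj y (p y)
    have h2 : ⟪y, p (p y)⟫_ℂ = 0 :=
      Submodule.inner_left_of_mem_orthogonal (hsK (hpxs (p y))) hy
    exact inner_self_eq_zero.mp (h1.trans h2)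
  have humem : u ∈ M := by
    rw [← SetLike.mem_coe, ← M.centralizer_centralizer]
    refine Set.mem_centralizer_iff.mpr (fun b hbmem => ?_)
    have hb : ∀ m, m ∈ M → m * b = b * m := fun m hm => Set.mem_centralizer_iff.mp hbmem m hm
    have hab : a * b = b * a := hb a ha
    have hasb : star a * b = b * star a := hb (star a) (star_mem ha)
    have hqb : (star a * a) * b = b * (star a * a) := by
      rw [mul_assoc, hab, ← mul_assoc, hasb, mul_assoc]
    have hpb : p * b = b * p :=
      my_commute_of_mem_elemental hqb
        (by rwa [(IsSelfAdjoint.star_mul_self a).star_eq]) (my_sqrt_mem_elemental _ hq)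
    have hpbx : ∀ x : H, p (b x) = b (p x) := fun x => ContinuousLinearMap.ext_iff.mp hpb x
    have hbu_on_s : ∀ z : H, z ∈ (s : Set H) → b (u z) = u (b z) := by
      intro z hz
      obtain ⟨x, rfl⟩ := LinearMap.mem_range.mp hz
      calc b (u (p x)) = b (a x) := by rw [hupx]
        _ = a (b x) := by
            have := ContinuousLinearMap.ext_iff.mp hab x
            simpa [ContinuousLinearMap.mul_apply] using this.symm
        _ = u (p (b x)) := (hupx _).symm
        _ = u (b (p x)) := by rw [hpbx]
    have hbuK : ∀ z : H, z ∈ K → b (u z) = u (b z) := by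
      intro z hz
      have hcl : IsClosed {z : H | b (u z) = u (b z)} :=
        isClosed_eq (b.continuous.comp u.continuous) (u.continuous.comp b.continuous)
      have hzc : z ∈ closure (s : Set H) := by
        rw [← Submodule.topologicalClosure_coe]; exact hz
      exact hcl.closure_subset_iff.mpr hbu_on_s hzc
    have hbuperp : ∀ z : H, z ∈ Kᗮ → b (u z) = u (b z) := by
      intro z hz
      rw [hu0 z hz, map_zero]
      have hpz : p (b z) = 0 := by rw [hpbx, hKp z hz, map_zero]
      rw [hu0 _ (hker _ hpz)]
    ext x
    show b (u x) = u (b x)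
    have hx : x = ((Submodule.orthogonalProjectionOnto K x : K) : H) + (x - ((Submodule.orthogonalProjectionOnto K x : K) : H)) :=
      (add_sub_cancel _ _).symm
    conv_lhs => rw [hx]
    conv_rhs => rw [hx]
    rw [map_add u, map_add b, map_add b, map_add u,
      hbuK _ (SetLike.coe_mem _), hbuperp (x - ((Submodule.orthogonalProjectionOnto K x : K) : H)) (Submodule.sub_starProjection_mem_orthogonal x)]
  exact ⟨u, humem, huuu, hau, hsua⟩
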